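/- Let σ > 0 and define θ(r) = (σ²/2 + √(σ⁴/4 + 2σ² r))/σ² for r > 0. Then (θ(r)-1)/r = (√2/σ) ∫₀^∞ e^{-s r} f(s; σ²/8) ds - ∫₀^∞ (1/2) e^{-r s} ds, where f(s;C) = (1/√(πs)) (e^{-C s} + √(π C s) erf(√(C s))). -/

import Mathlib

open Real MeasureTheory Set

/-- The Gauss error function. -/
noncomputable def erf (x : ℝ) : ℝ := (2 / Real.sqrt π) * ∫ t in (0:ℝ)..x, Real.exp (-t^2)

/-- The kernel `f(s; C)`. -/
noncomputable def fker (s C : ℝ) : ℝ :=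
  (1 / Real.sqrt (π * s)) * (Real.exp (-C * s) + Real.sqrt (π * C * s) * erf (Real.sqrt (C * s)))

/-- The positive root `θ(r)` of `(1/2)σ²θ² - (1/2)σ²θ - r = 0`. -/
noncomputable def θfun (σ r : ℝ) : ℝ :=
  (σ^2 / 2 + Real.sqrt (σ^4 / 4 + 2 * σ^2 * r)) / σ^2

lemma erf_hasDerivAt (x : ℝ) : HasDerivAt erf ((2 / Real.sqrt π) * Real.exp (-x^2)) x := by
  have hc : Continuous fun t : ℝ => Real.exp (-t^2) := by continuity
  have h := intervalIntegral.integral_hasDerivAt_right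
    (hc.intervalIntegrable 0 x)
    (hc.stronglyMeasurableAtFilter volume (nhds x))
    hc.continuousAt
  exact (h.const_mul (2 / Real.sqrt π))

lemma erf_zero : erf 0 = 0 := by simp [erf]

lemma erf_nonneg {x : ℝ} (hx : 0 ≤ x) : 0 ≤ erf x := by
  unfold erf
  apply mul_nonneg (by positivity)
  apply intervalIntegral.integral_nonneg hx
  intro t _; positivity

lemma gauss_integrable : IntegrableOn (fun t : ℝ => Real.exp (-t^2)) (Ioi 0) := by
  have := integrable_exp_neg_mul_sq (b := (1:ℝ)) one_pos
  simpa using this.integrableOn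

lemma erf_le_one {x : ℝ} (hx : 0 ≤ x) : erf x ≤ 1 := by
  have h1 : (∫ t in (0:ℝ)..x, Real.exp (-t^2)) ≤ ∫ t in Ioi (0:ℝ), Real.exp (-t^2) := by
    rw [intervalIntegral.integral_of_le hx]
    apply setIntegral_mono_set gauss_integrable
    · filter_upwards with t using le_of_lt (Real.exp_pos _)
    · exact HasSubset.Subset.eventuallyLE Ioc_subset_Ioi_self
  have h2 : (∫ t in Ioi (0:ℝ), Real.exp (-t^2)) = Real.sqrt π / 2 := by
    have := integral_gaussian_Ioi 1
    simpa using this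
  unfold erf
  rw [h2] at h1
  calc (2 / Real.sqrt π) * ∫ t in (0:ℝ)..x, Real.exp (-t^2)
      ≤ (2 / Real.sqrt π) * (Real.sqrt π / 2) := by
        apply mul_le_mul_of_nonneg_left h1 (by positivity)
    _ = 1 := by
        field_simp

lemma erf_continuous : Continuous erf :=
  continuous_iff_continuousAt.mpr fun x => (erf_hasDerivAt x).continuousAt

lemma erf_tendsto_one : Filter.Tendsto erf Filter.atTop (nhds 1) := by
  have h : Filter.Tendsto (fun x : ℝ => ∫ t in (0:ℝ)..x, Real.exp (-t^2)) Filter.atTop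
      (nhds (∫ t in Ioi (0:ℝ), Real.exp (-t^2))) :=
    intervalIntegral_tendsto_integral_Ioi 0 gauss_integrable Filter.tendsto_id
  have h2 : (∫ t in Ioi (0:ℝ), Real.exp (-t^2)) = Real.sqrt π / 2 := by
    simpa using integral_gaussian_Ioi 1
  have := h.const_mul (2 / Real.sqrt π)
  rw [h2] at this
  have hπ : Real.sqrt π ≠ 0 := by positivity
  convert this using 2
  · rfl
  · field_simp

lemma sqrt_mul_hasDerivAt (B s : ℝ) (hB : 0 < B) (hs : 0 < s) :
    HasDerivAt (fun u : ℝ => Real.sqrt (B * u)) (1 / (2 * Real.sqrt (B * s)) * B) s := by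
  have h1 : HasDerivAt (fun u : ℝ => B * u) B s := by
    simpa using (hasDerivAt_id s).const_mul B
  exact (Real.hasDerivAt_sqrt (by positivity)).comp s h1

lemma erf_comp_hasDerivAt (B s : ℝ) (hB : 0 < B) (hs : 0 < s) :
    HasDerivAt (fun u : ℝ => erf (Real.sqrt (B * u)))
      (Real.sqrt B * Real.exp (-B * s) / (Real.sqrt π * Real.sqrt s)) s := by
  have h := (erf_hasDerivAt (Real.sqrt (B * s))).comp s (sqrt_mul_hasDerivAt B s hB hs)
  convert h using 1
  · rfl
  · rfl
  · rfl
  have h2 : Real.sqrt (B * s) ^ 2 = B * s := Real.sq_sqrt (by positivity)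
  rw [h2, Real.sqrt_mul hB.le]
  have hp : Real.sqrt π ≠ 0 := by positivity
  have hb : Real.sqrt B ≠ 0 := by positivity
  have hq : Real.sqrt s ≠ 0 := by positivity
  have hb2 : Real.sqrt B * Real.sqrt B = B := Real.mul_self_sqrt hB.le
  field_simp
  ring_nf
  rw [Real.sq_sqrt hB.le]

lemma key_integral (C r : ℝ) (hC : 0 < C) (hr : 0 < r) :
    ∫ s in Ioi (0:ℝ), Real.exp (-s * r) * fker s C = Real.sqrt (r + C) / r := by
  set B := r + C with hBdef
  have hB : 0 < B := by positivity
  set H : ℝ → ℝ := fun s =>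
    Real.sqrt B / r * erf (Real.sqrt (B * s)) -
    Real.sqrt C / r * (Real.exp (-r * s) * erf (Real.sqrt (C * s))) with hH
  have hcont : ContinuousWithinAt H (Ici 0) 0 := by
    apply Continuous.continuousWithinAt
    have c1 : Continuous fun s : ℝ => erf (Real.sqrt (B * s)) :=
      erf_continuous.comp (Real.continuous_sqrt.comp (continuous_const.mul continuous_id))
    have c2 : Continuous fun s : ℝ => erf (Real.sqrt (C * s)) :=
      erf_continuous.comp (Real.continuous_sqrt.comp (continuous_const.mul continuous_id))
    have c3 : Continuous fun s : ℝ => Real.exp (-r * s) :=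
      Real.continuous_exp.comp (continuous_const.mul continuous_id)
    exact (continuous_const.mul c1).sub (continuous_const.mul (c3.mul c2))
  have hderiv : ∀ s ∈ Ioi (0:ℝ), HasDerivAt H (Real.exp (-s * r) * fker s C) s := by
    intro s hs
    rw [mem_Ioi] at hs
    have h1 := (erf_comp_hasDerivAt B s hB hs).const_mul (Real.sqrt B / r)
    have hexp : HasDerivAt (fun u : ℝ => Real.exp (-r * u)) (Real.exp (-r * s) * (-r)) s := by
      have : HasDerivAt (fun u : ℝ => -r * u) (-r) s := by
        simpa using (hasDerivAt_id s).const_mul (-r)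
      exact this.exp
    have h2 := ((hexp.mul (erf_comp_hasDerivAt C s hC hs)).const_mul (Real.sqrt C / r))
    have h := h1.sub h2
    convert h using 1
    · rfl
    · rfl
    · rfl
    have hp : Real.sqrt π ≠ 0 := by positivity
    have hq : Real.sqrt s ≠ 0 := by positivity
    have hb2 : Real.sqrt B * Real.sqrt B = B := Real.mul_self_sqrt hB.le
    have hc2 : Real.sqrt C * Real.sqrt C = C := Real.mul_self_sqrt hC.le
    have hBe : Real.exp (-B * s) = Real.exp (-r * s) * Real.exp (-C * s) := by
      rw [← Real.exp_add, hBdef]; ring_nf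
    unfold fker
    rw [Real.sqrt_mul pi_pos.le s, show π * C * s = π * (C * s) by ring,
      Real.sqrt_mul pi_pos.le (C * s), Real.sqrt_mul hC.le s, hBe,
      show (-s * r) = -r * s by ring]
    field_simp
    ring_nf
    rw [Real.sq_sqrt hB.le, Real.sq_sqrt hC.le]
    ring
  have hpos : ∀ s ∈ Ioi (0:ℝ), 0 ≤ Real.exp (-s * r) * fker s C := by
    intro s hs
    rw [mem_Ioi] at hs
    apply mul_nonneg (Real.exp_pos _).le
    unfold fker
    apply mul_nonneg (by positivity)
    have := erf_nonneg (Real.sqrt_nonneg (C * s))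
    positivity
  have htop : Filter.Tendsto H Filter.atTop (nhds (Real.sqrt B / r)) := by
    have hsq : Filter.Tendsto Real.sqrt Filter.atTop Filter.atTop := by
      apply Filter.tendsto_atTop_atTop.2
      intro b
      refine ⟨b ^ 2, fun a ha => ?_⟩
      calc b ≤ |b| := le_abs_self b
        _ = Real.sqrt (b ^ 2) := (Real.sqrt_sq_eq_abs b).symm
        _ ≤ Real.sqrt a := Real.sqrt_le_sqrt ha
    have hBs : Filter.Tendsto (fun s : ℝ => Real.sqrt (B * s)) Filter.atTop Filter.atTop :=
      hsq.comp (Filter.tendsto_id.const_mul_atTop hB)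
    have t1 : Filter.Tendsto (fun s : ℝ => Real.sqrt B / r * erf (Real.sqrt (B * s)))
        Filter.atTop (nhds (Real.sqrt B / r)) := by
      have := (erf_tendsto_one.comp hBs).const_mul (Real.sqrt B / r)
      simpa using this
    have t2 : Filter.Tendsto (fun s : ℝ =>
        Real.sqrt C / r * (Real.exp (-r * s) * erf (Real.sqrt (C * s))))
        Filter.atTop (nhds 0) := by
      have hexp0 : Filter.Tendsto (fun s : ℝ => Real.exp (-r * s)) Filter.atTop (nhds 0) := by
        have : Filter.Tendsto (fun s : ℝ => -r * s) Filter.atTop Filter.atBot :=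
          Filter.tendsto_id.const_mul_atTop_of_neg (neg_lt_zero.mpr hr)
        exact Real.tendsto_exp_atBot.comp this
      apply squeeze_zero' (g := fun s : ℝ => Real.sqrt C / r * Real.exp (-r * s))
      · filter_upwards [Filter.eventually_ge_atTop (0:ℝ)] with s hs
        have := erf_nonneg (Real.sqrt_nonneg (C * s))
        positivity
      · filter_upwards [Filter.eventually_ge_atTop (0:ℝ)] with s hs
        have h1 := erf_le_one (Real.sqrt_nonneg (C * s))
        have h2 := (Real.exp_pos (-r * s)).le
        have : Real.exp (-r * s) * erf (Real.sqrt (C * s)) ≤ Real.exp (-r * s) * 1 := by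
          apply mul_le_mul_of_nonneg_left h1 h2
        calc Real.sqrt C / r * (Real.exp (-r * s) * erf (Real.sqrt (C * s)))
            ≤ Real.sqrt C / r * (Real.exp (-r * s) * 1) := by
              apply mul_le_mul_of_nonneg_left this (by positivity)
          _ = Real.sqrt C / r * Real.exp (-r * s) := by ring
      · simpa using (hexp0.const_mul (Real.sqrt C / r))
    have h := t1.sub t2
    rw [sub_zero] at h
    exact h
  have := integral_Ioi_of_hasDerivAt_of_nonneg hcont hderiv hpos htop
  rw [this, hH]
  simp [erf_zero]

lemma easy_integral (r : ℝ) (hr : 0 < r) :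
    ∫ s in Ioi (0:ℝ), (1/2 : ℝ) * Real.exp (-r * s) = 1 / (2 * r) := by
  set g : ℝ → ℝ := fun s => -(1 / (2 * r)) * Real.exp (-r * s) with hg
  have hcont : ContinuousWithinAt g (Ici 0) 0 := by
    apply Continuous.continuousWithinAt
    exact continuous_const.mul (Real.continuous_exp.comp (continuous_const.mul continuous_id))
  have hderiv : ∀ s ∈ Ioi (0:ℝ), HasDerivAt g ((1/2 : ℝ) * Real.exp (-r * s)) s := by
    intro s _
    have h1 : HasDerivAt (fun u : ℝ => Real.exp (-r * u)) (Real.exp (-r * s) * (-r)) s := by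
      have : HasDerivAt (fun u : ℝ => -r * u) (-r) s := by
        simpa using (hasDerivAt_id s).const_mul (-r)
      exact this.exp
    have := h1.const_mul (-(1 / (2 * r)))
    convert this using 1
    · rfl
    · rfl
    field_simp
  have hpos : ∀ s ∈ Ioi (0:ℝ), 0 ≤ (1/2 : ℝ) * Real.exp (-r * s) := fun s _ => by positivity
  have htop : Filter.Tendsto g Filter.atTop (nhds 0) := by
    have hexp0 : Filter.Tendsto (fun s : ℝ => Real.exp (-r * s)) Filter.atTop (nhds 0) := by
      have : Filter.Tendsto (fun s : ℝ => -r * s) Filter.atTop Filter.atBot :=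
        Filter.tendsto_id.const_mul_atTop_of_neg (neg_lt_zero.mpr hr)
      exact Real.tendsto_exp_atBot.comp this
    have h := hexp0.const_mul (-(1 / (2 * r)))
    rw [mul_zero] at h
    exact h
  have := integral_Ioi_of_hasDerivAt_of_nonneg hcont hderiv hpos htop
  rw [this, hg]
  simp


theorem stmt6 (σ : ℝ) (hσ : 0 < σ) (r : ℝ) (hr : 0 < r) :
    (θfun σ r - 1) / r =
      (Real.sqrt 2 / σ) * (∫ s in Ioi (0:ℝ), Real.exp (-s * r) * fker s (σ^2 / 8)) -
      ∫ s in Ioi (0:ℝ), (1/2 : ℝ) * Real.exp (-r * s) := by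
  have hC : 0 < σ^2 / 8 := by positivity
  rw [key_integral (σ^2 / 8) r hC hr, easy_integral r hr]
  unfold θfun
  have h1 : Real.sqrt (σ^4 / 4 + 2 * σ^2 * r) = σ * Real.sqrt (σ^2 / 4 + 2 * r) := by
    rw [show σ^4 / 4 + 2 * σ^2 * r = σ^2 * (σ^2 / 4 + 2 * r) by ring,
      Real.sqrt_mul (by positivity), Real.sqrt_sq hσ.le]
  have h2 : Real.sqrt 2 * Real.sqrt (r + σ^2 / 8) = Real.sqrt (σ^2 / 4 + 2 * r) := by
    rw [← Real.sqrt_mul (by norm_num)]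
    congr 1
    ring
  rw [h1, ← h2]
  have hσ' : σ ≠ 0 := ne_of_gt hσ
  have hr' : r ≠ 0 := ne_of_gt hr
  field_simp
  ring
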